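/- arXiv:math/0311095 — 3 statements merged into one kernel-verified Lean document; each statement's English description precedes it below -/
import Mathlib

section
/- There exists a set A of infinite binary sequences (A ⊆ ℕ → Bool) such that the Gale–Stewart game of length ω on {0,1} with payoff set A is not determined: no strategy for Player I guarantees the play lies in A, and no strategy for Player II guarantees the play lies outside A. -/
open Cardinal


/-- A play `x` is consistent with strategy `σ` for Player I (who moves at even
indices) if at every even stage `n`, `x n` is the move `σ` assigns to the
position consisting of the first `n` moves. -/
def ConsI {M : Type*} (σ : List M → M) (x : ℕ → M) : Prop :=
  ∀ n : ℕ, n % 2 = 0 → x n = σ (List.ofFn fun i : Fin n => x i)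

/-- A play `x` is consistent with strategy `τ` for Player II (who moves at odd
indices). -/
def ConsII {M : Type*} (τ : List M → M) (x : ℕ → M) : Prop :=
  ∀ n : ℕ, n % 2 = 1 → x n = τ (List.ofFn fun i : Fin n => x i)

/-- The length-ω game with move set `M` and payoff `A` is determined: either
Player I has a strategy forcing the play into `A`, or Player II has a strategy
forcing the play out of `A`. -/
def Determined {M : Type*} (A : Set (ℕ → M)) : Prop :=
  (∃ σ : List M → M, ∀ x : ℕ → M, ConsI σ x → x ∈ A) ∨
  (∃ τ : List M → M, ∀ x : ℕ → M, ConsII τ x → x ∉ A)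

def play (σ τ : List Bool → Bool) : ℕ → Bool
  | n => (if n % 2 = 0 then σ else τ) (List.ofFn fun i : Fin n => play σ τ i)
  decreasing_by exact i.isLt

lemma play_consI (σ τ : List Bool → Bool) : ConsI σ (play σ τ) := by
  intro n hn; rw [play]; simp [hn]

lemma play_consII (σ τ : List Bool → Bool) : ConsII τ (play σ τ) := by
  intro n hn; rw [play]
  have : ¬ n % 2 = 0 := by omega
  simp [this]

/-- Continuum-many plays consistent with a Player-I strategy. -/
lemma mk_consI_ge (σ : List Bool → Bool) : #(ℕ → Bool) ≤ #{x | ConsI σ x} := by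
  have hinj : Function.Injective
      (fun y : ℕ → Bool => (⟨play σ (fun l => y ((l.length - 1) / 2)),
        play_consI _ _⟩ : {x | ConsI σ x})) := by
    intro y₁ y₂ h
    funext n
    have h' := congrArg (fun z : {x | ConsI σ x} => (z : ℕ → Bool) (2 * n + 1)) h
    have e₁ := play_consII σ (fun l => y₁ ((l.length - 1) / 2)) (2 * n + 1) (by omega)
    have e₂ := play_consII σ (fun l => y₂ ((l.length - 1) / 2)) (2 * n + 1) (by omega)
    simp only [List.length_ofFn] at e₁ e₂
    have hn : (2 * n + 1 - 1) / 2 = n := by omega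
    rw [hn] at e₁ e₂
    simpa [e₁, e₂] using h'
  exact Cardinal.mk_le_of_injective hinj

/-- Continuum-many plays consistent with a Player-II strategy. -/
lemma mk_consII_ge (τ : List Bool → Bool) : #(ℕ → Bool) ≤ #{x | ConsII τ x} := by
  have hinj : Function.Injective
      (fun y : ℕ → Bool => (⟨play (fun l => y (l.length / 2)) τ,
        play_consII _ _⟩ : {x | ConsII τ x})) := by
    intro y₁ y₂ h
    funext n
    have h' := congrArg (fun z : {x | ConsII τ x} => (z : ℕ → Bool) (2 * n)) h
    have e₁ := play_consI (fun l => y₁ (l.length / 2)) τ (2 * n) (by omega)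
    have e₂ := play_consI (fun l => y₂ (l.length / 2)) τ (2 * n) (by omega)
    simp only [List.length_ofFn] at e₁ e₂
    have hn : 2 * n / 2 = n := by omega
    rw [hn] at e₁ e₂
    simpa [e₁, e₂] using h'
  exact Cardinal.mk_le_of_injective hinj

universe u

/-- Transfinite choice: pick pairwise-distinct elements, one in each `H i`. -/
lemma exists_inj_choice {X : Type u} {ι : Type u} [LinearOrder ι] [WellFoundedLT ι]
    (hsmall : ∀ i : ι, #(Set.Iio i) < #X)
    (H : ι → Set X) (hH : ∀ i, #X ≤ #(H i)) :
    ∃ c : ι → X, Function.Injective c ∧ ∀ i, c i ∈ H i := by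
  have key : ∀ (i : ι) (f : Set.Iio i → X), ∃ x, x ∈ H i ∧ ∀ j : Set.Iio i, f j ≠ x := by
    intro i f
    by_contra hc
    push_neg at hc
    have hsub : H i ⊆ Set.range f := by
      intro x hx
      obtain ⟨j, hj⟩ := hc x hx
      exact ⟨j, hj⟩
    have h1 : #(H i) ≤ #(Set.Iio i) :=
      le_trans (Cardinal.mk_le_mk_of_subset hsub) Cardinal.mk_range_le
    exact absurd (le_trans (hH i) h1) (not_le.2 (hsmall i))
  let F : ∀ i : ι, (∀ j : ι, j < i → X) → X :=
    fun i rec => Classical.choose (key i (fun j => rec j j.2))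
  let c : ι → X := IsWellFounded.fix (· < ·) F
  have hc : ∀ i, c i = F i (fun j _ => c j) := fun i => IsWellFounded.fix_eq _ F i
  have spec : ∀ i, c i ∈ H i ∧ ∀ j : Set.Iio i, c j ≠ c i := by
    intro i
    have := Classical.choose_spec (key i (fun j : Set.Iio i => c j))
    rw [hc i]
    exact this
  refine ⟨c, ?_, fun i => (spec i).1⟩
  intro i j hij
  rcases lt_trichotomy i j with h | h | h
  · exact absurd hij ((spec j).2 ⟨i, h⟩)
  · exact h
  · exact absurd hij.symm ((spec i).2 ⟨j, h⟩)

lemma mk_index : #(Bool × (List Bool → Bool)) = #(ℕ → Bool) := by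
  have h1 : #(List Bool → Bool) = 2 ^ Cardinal.aleph0 := by
    rw [Cardinal.mk_arrow]
    simp [Cardinal.mk_list_eq_aleph0]
  have h2 : #(ℕ → Bool) = 2 ^ Cardinal.aleph0 := by
    rw [Cardinal.mk_arrow]
    simp
  rw [Cardinal.mk_prod, h1, h2]
  simp only [Cardinal.mk_bool, Cardinal.lift_id, Cardinal.lift_two]
  have h3 : (2 : Cardinal) * 2 ^ Cardinal.aleph0 = 2 ^ ((1 : Cardinal) + Cardinal.aleph0) := by
    rw [Cardinal.power_add, Cardinal.power_one]
  rw [h3]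
  congr 1
  rw [add_comm]
  exact Cardinal.add_one_eq le_rfl

/-- There exists an undetermined payoff set for the Gale–Stewart game of
length ω on {0,1}. -/
theorem exists_undetermined_set : ∃ A : Set (ℕ → Bool), ¬ Determined A := by
  classical
  set X := ℕ → Bool
  set ι := (#X).ord.ToType with hι
  -- an enumeration of all (player, strategy) pairs by ι
  have hmk : #ι = #(Bool × (List Bool → Bool)) := by
    rw [mk_toType, Cardinal.card_ord, mk_index]
  obtain ⟨e⟩ := Cardinal.eq.1 hmk
  -- the family of constraint sets
  let H : ι → Set X := fun i =>
    if (e i).1 then {x | ConsII (e i).2 x} else {x | ConsI (e i).2 x}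
  have hH : ∀ i, #X ≤ #(H i) := by
    intro i
    by_cases h : (e i).1
    · have : H i = {x | ConsII (e i).2 x} := by simp [H, h]; rfl
      rw [this]; exact mk_consII_ge (e i).2
    · have : H i = {x | ConsI (e i).2 x} := by simp [H, h]; rfl
      rw [this]; exact mk_consI_ge (e i).2
  have hsmall : ∀ i : ι, #(Set.Iio i) < #X := fun i => mk_Iio_ord_toType i
  obtain ⟨c, hcinj, hcmem⟩ := exists_inj_choice hsmall H hH
  refine ⟨{x | ∃ τ : List Bool → Bool, x = c (e.symm (true, τ))}, ?_⟩
  rintro (⟨σ, hσ⟩ | ⟨τ, hτ⟩)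
  · -- σ would be winning for I, but c (e.symm (false, σ)) is consistent with σ and ∉ A
    set i := e.symm (false, σ) with hi
    have hmem := hcmem i
    have hHi : H i = {x | ConsI σ x} := by
      simp [H, hi]; rfl
    rw [hHi] at hmem
    obtain ⟨τ, hτ⟩ := hσ _ hmem
    have := hcinj hτ
    have h2 := congrArg e this
    rw [hi, Equiv.apply_symm_apply, Equiv.apply_symm_apply] at h2
    exact Bool.false_ne_true (congrArg Prod.fst h2)
  · -- τ would be winning for II, but c (e.symm (true, τ)) is consistent with τ and ∈ A
    set i := e.symm (true, τ) with hi
    have hmem := hcmem i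
    have hHi : H i = {x | ConsII τ x} := by
      simp [H, hi]; rfl
    rw [hHi] at hmem
    exact hτ _ hmem ⟨τ, rfl⟩
end

section
/- If in the perfect-set game of length ω₁ Player II has a winning strategy S, then the payoff set X ⊆ (ω₁ → Bool) has cardinality at most 2^ℵ₀: there is an injection from X into the set of positions of the game. -/
/-- The first uncountable ordinal. -/
noncomputable def Omega1 : Ordinal := (Cardinal.aleph 1).ord

/-- A position of the perfect-set game: a binary sequence of some countable
length (the concatenation of the moves made so far). -/
def GState := Σ β : Set.Iio Omega1, (Set.Iio β.val → Bool)

/-- The position of length `β` determined by the length-`ω₁` sequence `x`. -/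
def gStateAt (x : Set.Iio Omega1 → Bool) (β : Set.Iio Omega1) : GState :=
  ⟨β, fun ξ => x ⟨ξ.val, Set.mem_Iio.mpr
      (lt_trans (Set.mem_Iio.mp ξ.2) (Set.mem_Iio.mp β.2))⟩⟩

/-- A play of the perfect-set game is recorded by the resulting length-`ω₁`
binary sequence `x` together with the function `L` giving, for each round `α`,
the position at which Player II's bit of round `α` is placed (Player I's
countable move of round `α` occupies the positions between the earlier rounds
and `L α`).  The record is valid iff `L` is strictly increasing. -/
def ValidL (L : Set.Iio Omega1 → Set.Iio Omega1) : Prop :=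
  ∀ γ α : Set.Iio Omega1, γ.val < α.val → (L γ).val < (L α).val

/-- The play `(x, L)` is consistent with the strategy `τ` for Player II
(assigning a bit to every position): at each round `α`, the bit `x (L α)` is
the one `τ` dictates at the position of length `L α`. -/
def GConsII (τ : GState → Bool) (x : Set.Iio Omega1 → Bool)
    (L : Set.Iio Omega1 → Set.Iio Omega1) : Prop :=
  ∀ α : Set.Iio Omega1, x (L α) = τ (gStateAt x (L α))

universe u v

lemma omega1_pos : (0 : Ordinal) < Omega1 := by
  unfold Omega1
  rw [← Cardinal.ord_zero]
  exact Cardinal.ord_lt_ord.mpr (Cardinal.aleph_pos 1)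

lemma lt_add_one_ord (b : Ordinal) : b < b + 1 := by
  rw [Ordinal.add_one_eq_succ]; exact Order.lt_succ b

lemma succ_lt_omega1 {b : Ordinal} (hb : b < Omega1) : b + 1 < Omega1 := by
  rw [Ordinal.add_one_eq_succ]
  exact (Cardinal.isSuccLimit_ord (Cardinal.aleph0_le_aleph 1)).succ_lt hb

lemma countable_bdd_omega1 {S : Set Ordinal} (hS : S.Countable)
    (h : ∀ s ∈ S, s < Omega1) : ∃ b, b < Omega1 ∧ ∀ s ∈ S, s ≤ b := by
  rcases S.eq_empty_or_nonempty with rfl | hne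
  · exact ⟨0, omega1_pos, by simp⟩
  · obtain ⟨f, hf⟩ := hS.exists_surjective hne
    refine ⟨iSup (fun n => (f n : Ordinal)), ?_, ?_⟩
    · have := Ordinal.iSup_lt_omega_one (f := fun n => (f n : Ordinal))
        (fun n => by rw [← Cardinal.ord_aleph]; exact h _ (f n).2)
      rwa [← Cardinal.ord_aleph] at this
    · intro s hs
      obtain ⟨n, hn⟩ := hf ⟨s, hs⟩
      have hs' : s = (f n : Ordinal) := by rw [hn]
      rw [hs']
      exact le_ciSup (Ordinal.bddAbove_range _) n

lemma countable_Iio_omega1 {α : Ordinal.{u}} (hα : α < Omega1) :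
    (Set.Iio α).Countable := by
  rw [Cardinal.countable_iff_lt_aleph_one, Ordinal.mk_Iio_ordinal]
  have h1 : α.card < Cardinal.aleph 1 := Cardinal.lt_ord.mp hα
  have h2 : Cardinal.lift.{u+1} α.card < Cardinal.lift.{u+1} (Cardinal.aleph 1) :=
    Cardinal.lift_lt.mpr h1
  rwa [Cardinal.lift_aleph, Ordinal.lift_one] at h2

lemma bool_eq_of_ne_ne : ∀ a b c : Bool, a ≠ c → b ≠ c → a = b := by decide

lemma lift_omega1 : Ordinal.lift.{v, u} Omega1.{u} = Omega1.{max u v} := by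
  unfold Omega1
  rw [Cardinal.lift_ord, Cardinal.lift_aleph, Ordinal.lift_one]

lemma o1e_aux (a : Set.Iio Omega1.{u}) :
    ∃ b : Ordinal.{v}, Ordinal.lift.{u, v} b = Ordinal.lift.{v, u} a.1 := by
  apply Ordinal.mem_range_lift_of_le
  have h1 : Ordinal.lift.{v, u} a.1 < Omega1.{max u v} := by
    rw [← lift_omega1.{u, v}]
    exact Ordinal.lift_lt.mpr a.2
  rw [lift_omega1.{v, u}]
  exact h1.le

/-- The canonical bijection between copies of `ω₁` in different universes. -/
noncomputable def o1e (a : Set.Iio Omega1.{u}) : Set.Iio Omega1.{v} :=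
  ⟨(o1e_aux.{u, v} a).choose, by
    have hsp := (o1e_aux.{u, v} a).choose_spec
    have h1 : Ordinal.lift.{v, u} a.1 < Omega1.{max u v} := by
      rw [← lift_omega1.{u, v}]
      exact Ordinal.lift_lt.mpr a.2
    rw [← hsp, ← lift_omega1.{v, u}] at h1
    exact Ordinal.lift_lt.mp h1⟩

lemma o1e_lift (a : Set.Iio Omega1.{u}) :
    Ordinal.lift.{u, v} (o1e.{u, v} a).1 = Ordinal.lift.{v, u} a.1 :=
  (o1e_aux.{u, v} a).choose_spec

lemma o1e_lt {a b : Set.Iio Omega1.{u}} (hab : a.1 < b.1) :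
    (o1e.{u, v} a).1 < (o1e.{u, v} b).1 := by
  have h : Ordinal.lift.{u, v} (o1e.{u, v} a).1 < Ordinal.lift.{u, v} (o1e.{u, v} b).1 := by
    rw [o1e_lift, o1e_lift]
    exact Ordinal.lift_lt.mpr hab
  exact Ordinal.lift_lt.mp h

lemma o1e_o1e (a : Set.Iio Omega1.{u}) : o1e.{v, u} (o1e.{u, v} a) = a := by
  apply Subtype.ext
  apply Ordinal.lift_inj.{v, u}.mp
  rw [o1e_lift.{v, u} (o1e.{u, v} a), o1e_lift.{u, v} a]

lemma o1e_inj {a b : Set.Iio Omega1.{u}} (hab : o1e.{u, v} a = o1e.{u, v} b) : a = b := by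
  rw [← o1e_o1e.{u, v} a, ← o1e_o1e.{u, v} b, hab]

/-- Transport a game position to another universe. -/
noncomputable def mapState (s : GState.{u}) : GState.{v} :=
  ⟨o1e.{u, v} s.1, fun ξ =>
    s.2 ⟨(o1e.{v, u} ⟨ξ.1, Set.mem_Iio.mpr
        (lt_trans (Set.mem_Iio.mp ξ.2) (Set.mem_Iio.mp (o1e.{u, v} s.1).2))⟩).1, by
      have h := o1e_lt.{v, u} (a := ⟨ξ.1, Set.mem_Iio.mpr
          (lt_trans (Set.mem_Iio.mp ξ.2) (Set.mem_Iio.mp (o1e.{u, v} s.1).2))⟩)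
        (b := o1e.{u, v} s.1) (Set.mem_Iio.mp ξ.2)
      rw [o1e_o1e] at h
      exact Set.mem_Iio.mpr h⟩⟩

lemma mapState_inj : Function.Injective mapState.{u, v} := by
  rintro ⟨β, g⟩ ⟨β', g'⟩ hst
  unfold mapState at hst
  obtain ⟨h1, h2⟩ := Sigma.mk.inj_iff.mp hst
  have hb : β = β' := o1e_inj h1
  subst hb
  have h4 := eq_of_heq h2
  have hg : g = g' := by
    funext ζ
    have hmem : ζ.1 ∈ Set.Iio Omega1.{u} :=
      Set.mem_Iio.mpr (lt_trans (Set.mem_Iio.mp ζ.2) (Set.mem_Iio.mp β.2))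
    have h2' := congrFun h4 ⟨(o1e.{u, v} ⟨ζ.1, hmem⟩).1,
      Set.mem_Iio.mpr (o1e_lt (Set.mem_Iio.mp ζ.2))⟩
    have key2 : ∀ w : Set.Iio β.1, w = ζ → g w = g' w → g ζ = g' ζ :=
      fun w hw hgw => hw ▸ hgw
    refine key2 _ (Subtype.ext ?_) h2'
    have hv := congrArg Subtype.val (o1e_o1e.{u, v} (⟨ζ.1, hmem⟩ : Set.Iio Omega1.{u}))
    exact hv
  rw [hg]

lemma mk_gstate_le : Cardinal.mk GState.{u} ≤ Cardinal.continuum := by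
  have h1 : Cardinal.mk GState.{u}
      = Cardinal.sum (fun β : Set.Iio Omega1.{u} => Cardinal.mk (Set.Iio β.val → Bool)) :=
    Cardinal.mk_sigma _
  rw [h1]
  have h2 : ∀ β : Set.Iio Omega1.{u},
      Cardinal.mk (Set.Iio β.val → Bool) ≤ Cardinal.continuum := by
    intro β
    have hc : Cardinal.mk (Set.Iio β.val) ≤ Cardinal.aleph0 := by
      have := (countable_Iio_omega1 β.2).to_subtype
      exact Cardinal.mk_le_aleph0
    rw [Cardinal.mk_arrow]
    simp only [Cardinal.mk_bool, Cardinal.lift_ofNat, Cardinal.lift_uzero]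
    calc (2 : Cardinal) ^ (Cardinal.mk (Set.Iio β.val))
        ≤ (2 : Cardinal) ^ Cardinal.aleph0 :=
          Cardinal.power_le_power_left (by norm_num) hc
      _ = Cardinal.continuum := Cardinal.two_power_aleph0
  calc Cardinal.sum (fun β : Set.Iio Omega1.{u} => Cardinal.mk (Set.Iio β.val → Bool))
      ≤ Cardinal.sum (fun _ : Set.Iio Omega1.{u} => Cardinal.continuum) :=
        Cardinal.sum_le_sum _ _ h2
    _ = Cardinal.mk (Set.Iio Omega1.{u}) * Cardinal.continuum := Cardinal.sum_const' _ _
    _ ≤ Cardinal.continuum * Cardinal.continuum := by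
        apply mul_le_mul_left
        rw [Ordinal.mk_Iio_ordinal]
        unfold Omega1
        rw [Cardinal.card_ord, Cardinal.lift_aleph, Ordinal.lift_one]
        exact Cardinal.aleph_one_le_continuum
    _ = Cardinal.continuum := Cardinal.mul_eq_self Cardinal.aleph0_le_continuum

/-- If Player II has a winning strategy in the perfect-set game of length `ω₁`
with payoff `X ⊆ (ω₁ → Bool)`, then there is an injection of `X` into the set
of positions of the game; in particular `X` has cardinality at most `2^ℵ₀`. -/
theorem perfectSetGame_II_wins_card (X : Set (Set.Iio Omega1 → Bool))
    (h : ∃ τ : GState → Bool, ∀ x L, ValidL L → GConsII τ x L → x ∉ X) :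
    (∃ f : X → GState, Function.Injective f) ∧
    Cardinal.mk ↥X ≤ Cardinal.continuum := by
  obtain ⟨τ, hτ⟩ := h
  have hbound : ∀ x : X, ∃ b, b < Omega1 ∧ ∀ γ (hγ : γ < Omega1),
      x.1 ⟨γ, hγ⟩ = τ (gStateAt x.1 ⟨γ, hγ⟩) → γ < b := by
    intro ⟨x, hx⟩
    by_contra hcon
    push_neg at hcon
    set S' : Set Ordinal := {γ | (∃ hγ : γ < Omega1,
        x ⟨γ, hγ⟩ = τ (gStateAt x ⟨γ, hγ⟩)) ∨ Omega1 ≤ γ} with hS'def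
    have hS' : ¬ BddAbove S' := by
      rintro ⟨b, hb⟩
      have hmem : max b Omega1 + 1 ∈ S' :=
        Or.inr ((le_max_right b Omega1).trans (lt_add_one_ord _).le)
      exact absurd (hb hmem)
        (not_le.mpr ((le_max_left b Omega1).trans_lt (lt_add_one_ord _)))
    have key : ∀ α : Ordinal, α < Omega1 → Ordinal.enumOrd S' α < Omega1 := by
      intro α
      induction α using Ordinal.induction with
      | h α IH =>
        intro hα
        have hTc : (Ordinal.enumOrd S' '' Set.Iio α).Countable :=
          (countable_Iio_omega1 hα).image _
        obtain ⟨b, hbΩ, hbb⟩ := countable_bdd_omega1 hTc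
          (by rintro _ ⟨c, hc, rfl⟩; exact IH c hc (hc.trans hα))
        obtain ⟨γ, hγΩ, hγeq, hγge⟩ := hcon (b + 1) (succ_lt_omega1 hbΩ)
        have hle : Ordinal.enumOrd S' α ≤ γ := by
          apply Ordinal.enumOrd_le_of_forall_lt (Or.inl ⟨hγΩ, hγeq⟩)
          intro c hc
          exact lt_of_le_of_lt (hbb _ ⟨c, hc, rfl⟩)
            (lt_of_lt_of_le (lt_add_one_ord b) hγge)
        exact hle.trans_lt hγΩ
    refine hτ x (fun α => ⟨Ordinal.enumOrd S' (o1e α).1, key _ (o1e α).2⟩) ?_ ?_ hx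
    · intro γ α hlt
      exact Ordinal.enumOrd_strictMono hS' (o1e_lt hlt)
    · intro α
      rcases Ordinal.enumOrd_mem hS' (o1e α).1 with ⟨hγ, heq⟩ | hge
      · exact heq
      · exact absurd (key _ (o1e α).2) (not_lt.mpr hge)
  choose bfun hbΩ hbspec using hbound
  have hinj : Function.Injective
      (fun x : X => gStateAt x.1 ⟨bfun x, hbΩ x⟩) := by
    intro x y hxy
    simp only at hxy
    have hb : bfun x = bfun y := congrArg (fun s : GState => s.1.1) hxy
    unfold gStateAt at hxy
    obtain ⟨h1, h2⟩ := Sigma.mk.inj_iff.mp hxy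
    rw [← h1] at h2
    have h4 := eq_of_heq h2
    have agree : ∀ ξ (hξ : ξ < bfun x) (hξΩ : ξ < Omega1),
        x.1 ⟨ξ, hξΩ⟩ = y.1 ⟨ξ, hξΩ⟩ := by
      intro ξ hξ hξΩ
      exact congrFun h4 ⟨ξ, hξ⟩
    have main : ∀ γ : Ordinal, ∀ hγ : γ < Omega1, x.1 ⟨γ, hγ⟩ = y.1 ⟨γ, hγ⟩ := by
      intro γ
      induction γ using Ordinal.induction with
      | h γ IH =>
        intro hγ
        by_cases hc : γ < bfun x
        · exact agree γ hc hγ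
        · have hstate : gStateAt x.1 ⟨γ, hγ⟩ = gStateAt y.1 ⟨γ, hγ⟩ := by
            unfold gStateAt
            congr 1
            funext ξ
            exact IH ξ.1 ξ.2 _
          have hxne : x.1 ⟨γ, hγ⟩ ≠ τ (gStateAt x.1 ⟨γ, hγ⟩) :=
            fun hEq => hc (hbspec x γ hγ hEq)
          have hyne : y.1 ⟨γ, hγ⟩ ≠ τ (gStateAt x.1 ⟨γ, hγ⟩) := by
            rw [hstate]
            exact fun hEq => hc (hb ▸ hbspec y γ hγ hEq)
          exact bool_eq_of_ne_ne _ _ _ hxne hyne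
    apply Subtype.ext
    funext ⟨γ, hγ⟩
    exact main γ hγ
  constructor
  · exact ⟨fun x => mapState (gStateAt x.1 ⟨bfun x, hbΩ x⟩),
      fun a b hab => hinj (mapState_inj hab)⟩
  · exact (Cardinal.mk_le_of_injective hinj).trans mk_gstate_le
end

section
/- Suppose every set A ⊆ (ℕ → Bool) in a pointclass Γ closed under complements is determined, where for each A ∈ Γ the game G*(A) from descriptive set theory is also in Γ. Then every A ∈ Γ is either countable or contains a perfect subset. -/
/-- A round of the *-game `G*(A)`: Player I's move (a nonempty finite binary
sequence) followed by Player II's move (a single bit). -/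
def StarRound := {l : List Bool // l ≠ []} × Bool

/-- The infinite binary sequence obtained by concatenating all rounds of a
play of the *-game (round `k` contributes Player I's sequence followed by
Player II's bit). -/
def starPlay (p : ℕ → StarRound) : ℕ → Bool := fun n =>
  (((List.range (n + 1)).map fun k => (p k).1.val ++ [(p k).2]).flatten).getD n false

/-- Consistency of a play of the *-game with a strategy for Player I, who sees
all previous rounds. -/
def StarConsI (σ : List StarRound → {l : List Bool // l ≠ []})
    (p : ℕ → StarRound) : Prop :=
  ∀ k : ℕ, (p k).1 = σ (List.ofFn fun i : Fin k => p i)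

/-- Consistency with a strategy for Player II, who sees all previous rounds
and Player I's move of the current round. -/
def StarConsII (τ : List StarRound → {l : List Bool // l ≠ []} → Bool)
    (p : ℕ → StarRound) : Prop :=
  ∀ k : ℕ, (p k).2 = τ (List.ofFn fun i : Fin k => p i) (p k).1

/-- Determinacy of the *-game `G*(A)`: Player I wins a play iff the
concatenated sequence lies in `A`. -/
def StarDetermined (A : Set (ℕ → Bool)) : Prop :=
  (∃ σ, ∀ p : ℕ → StarRound, StarConsI σ p → starPlay p ∈ A) ∨
  (∃ τ, ∀ p : ℕ → StarRound, StarConsII τ p → starPlay p ∉ A)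


namespace StarAux

instance : Countable StarRound :=
  inferInstanceAs (Countable ({l : List Bool // l ≠ []} × Bool))

def blockL (r : StarRound) : List Bool := r.1.val ++ [r.2]

def concatL (u : List StarRound) : List Bool := (u.map blockL).flatten

def concatTo (p : ℕ → StarRound) (k : ℕ) : List Bool :=
  ((List.range k).map fun i => blockL (p i)).flatten

lemma starPlay_def (p : ℕ → StarRound) (n : ℕ) :
    starPlay p n = (concatTo p (n + 1)).getD n false := rfl

lemma concatTo_succ (p : ℕ → StarRound) (k : ℕ) :
    concatTo p (k + 1) = concatTo p k ++ blockL (p k) := by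
  simp [concatTo, List.range_succ]

lemma length_concatTo_ge (p : ℕ → StarRound) (k : ℕ) : k ≤ (concatTo p k).length := by
  induction k with
  | zero => simp
  | succ k ih =>
    rw [concatTo_succ]
    simp only [List.length_append, blockL, List.length_cons]
    omega

lemma concatTo_prefix (p : ℕ → StarRound) {j m : ℕ} (h : j ≤ m) :
    ∃ r, concatTo p m = concatTo p j ++ r := by
  induction m with
  | zero =>
    have : j = 0 := Nat.le_zero.mp h
    subst this
    exact ⟨[], rfl⟩
  | succ m ih =>
    rcases Nat.lt_or_ge j (m + 1) with h' | h'
    · obtain ⟨r, hr⟩ := ih (by omega)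
      exact ⟨r ++ blockL (p m), by rw [concatTo_succ, hr, List.append_assoc]⟩
    · have : j = m + 1 := by omega
      exact ⟨[], by simp [this]⟩

lemma starPlay_eq_getD (p : ℕ → StarRound) {m n : ℕ}
    (hn : n < (concatTo p m).length) :
    starPlay p n = (concatTo p m).getD n false := by
  rw [starPlay_def]
  have hn1 : n < (concatTo p (n + 1)).length :=
    lt_of_lt_of_le (Nat.lt_succ_self n) (length_concatTo_ge p (n + 1))
  rcases le_total (n + 1) m with h | h
  · obtain ⟨r, hr⟩ := concatTo_prefix p h
    rw [hr, List.getD_append _ _ _ _ hn1]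
  · obtain ⟨r, hr⟩ := concatTo_prefix p h
    rw [hr, List.getD_append _ _ _ _ hn]

lemma concatTo_congr {p q : ℕ → StarRound} {k : ℕ} (h : ∀ j < k, p j = q j) :
    concatTo p k = concatTo q k := by
  induction k with
  | zero => rfl
  | succ k ih =>
    rw [concatTo_succ, concatTo_succ, ih (fun j hj => h j (by omega)),
      h k (Nat.lt_succ_self k)]

lemma ofFn_succ_append {α : Type*} {n : ℕ} (f : ℕ → α) :
    (List.ofFn fun i : Fin (n + 1) => f i) =
      (List.ofFn fun i : Fin n => f i) ++ [f n] := by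
  rw [List.ofFn_succ']
  simp [List.concat_eq_append]

lemma concatL_append (u v : List StarRound) :
    concatL (u ++ v) = concatL u ++ concatL v := by
  simp [concatL]

lemma concatL_singleton (r : StarRound) : concatL [r] = blockL r := by
  simp [concatL]

lemma concatTo_eq_concatL (p : ℕ → StarRound) (k : ℕ) :
    concatTo p k = concatL (List.ofFn fun i : Fin k => p i) := by
  induction k with
  | zero => rfl
  | succ k ih =>
    rw [concatTo_succ, ih, ofFn_succ_append, concatL_append, concatL_singleton]

def buildPlay (step : List StarRound → StarRound) (k : ℕ) : StarRound :=
  step (List.ofFn fun i : Fin k => buildPlay step i)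
decreasing_by exact i.isLt

lemma buildPlay_eq (step : List StarRound → StarRound) (k : ℕ) :
    buildPlay step k = step (List.ofFn fun i : Fin k => buildPlay step i) := by
  rw [buildPlay]

/-! ### Player I: perfect set -/

section PlayerI

variable (σ : List StarRound → {l : List Bool // l ≠ []})

def playI (s : ℕ → Bool) : ℕ → StarRound :=
  buildPlay fun u => (σ u, s u.length)

lemma playI_eq (s : ℕ → Bool) (k : ℕ) :
    playI σ s k = (σ (List.ofFn fun i : Fin k => playI σ s i), s k) := by
  have h := buildPlay_eq (fun u => ((σ u, s u.length) : StarRound)) k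
  rw [List.length_ofFn] at h
  exact h

lemma playI_consI (s : ℕ → Bool) : StarConsI σ (playI σ s) := by
  intro k; rw [playI_eq]

lemma playI_congr {s t : ℕ → Bool} {n : ℕ} (h : ∀ i ≤ n, s i = t i) :
    ∀ k ≤ n, playI σ s k = playI σ t k := by
  intro k
  induction k using Nat.strong_induction_on with
  | _ k ih =>
    intro hk
    rw [playI_eq, playI_eq, h k hk]
    have : (List.ofFn fun i : Fin k => playI σ s i) =
        List.ofFn fun i : Fin k => playI σ t i := by
      rw [List.ofFn_inj]
      funext i
      exact ih i i.isLt (le_trans (le_of_lt i.isLt) hk)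
    rw [this]

def fI (s : ℕ → Bool) : ℕ → Bool := starPlay (playI σ s)

lemma playI_agree {s t : ℕ → Bool} {k : ℕ} (h : ∀ j < k, s j = t j) :
    ∀ j < k, playI σ s j = playI σ t j := by
  intro j
  induction j using Nat.strong_induction_on with
  | _ j ih =>
    intro hj
    rw [playI_eq, playI_eq, h j hj]
    have : (List.ofFn fun i : Fin j => playI σ s i) =
        List.ofFn fun i : Fin j => playI σ t i := by
      rw [List.ofFn_inj]
      funext i
      exact ih i i.isLt (lt_trans i.isLt hj)
    rw [this]

lemma fI_injective : Function.Injective (fI σ) := by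
  intro s t hst
  by_contra hne
  have hex : ∃ k, s k ≠ t k := Function.ne_iff.mp hne
  set k := Nat.find hex with hkdef
  have hk : s k ≠ t k := Nat.find_spec hex
  have hmin : ∀ j < k, s j = t j := by
    intro j hj
    by_contra hc
    have h2 : k ≤ j := hkdef ▸ Nat.find_le hc
    omega
  set p := playI σ s
  set q := playI σ t
  have hpq : ∀ j < k, p j = q j := playI_agree σ hmin
  have hC : concatTo p k = concatTo q k := concatTo_congr hpq
  have hfst : (p k).1 = (q k).1 := by
    show (playI σ s k).1 = (playI σ t k).1
    rw [playI_eq, playI_eq]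
    have : (List.ofFn fun i : Fin k => playI σ s i) =
        List.ofFn fun i : Fin k => playI σ t i := by
      rw [List.ofFn_inj]; funext i; exact hpq i i.isLt
    rw [this]
  set C := concatTo p k
  set L := (p k).1.val
  set N := C.length + L.length with hN
  have hsnd_p : (p k).2 = s k := by show (playI σ s k).2 = s k; rw [playI_eq]
  have hsnd_q : (q k).2 = t k := by show (playI σ t k).2 = t k; rw [playI_eq]
  have key : ∀ (r : ℕ → StarRound) (b : Bool), concatTo r k = C → (r k).1.val = L →
      (r k).2 = b → starPlay r N = b := by
    intro r b h1 h2 h3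
    have hlen : N < (concatTo r (k + 1)).length := by
      rw [concatTo_succ, h1]
      simp only [List.length_append, blockL, h2, List.length_cons]
      omega
    rw [starPlay_eq_getD r hlen, concatTo_succ, h1]
    have : C ++ blockL (r k) = (C ++ L) ++ [b] := by
      rw [List.append_assoc]; simp [blockL, h2, h3]
    rw [this, List.getD_append_right _ _ _ _ (by simp [hN]), ]
    simp [hN]
  have h1 : starPlay p N = s k := key p (s k) rfl rfl hsnd_p
  have h2 : starPlay q N = t k := key q (t k) hC.symm (by rw [← hfst]) hsnd_q
  have : starPlay p N = starPlay q N := congrFun hst N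
  rw [h1, h2] at this
  exact hk this

lemma fI_local {s t : ℕ → Bool} {n : ℕ} (h : ∀ i ≤ n, s i = t i) :
    fI σ s n = fI σ t n := by
  have hagree : ∀ j < n + 1, playI σ s j = playI σ t j :=
    fun j hj => playI_congr σ h j (by omega)
  have : concatTo (playI σ s) (n + 1) = concatTo (playI σ t) (n + 1) :=
    concatTo_congr hagree
  show starPlay (playI σ s) n = starPlay (playI σ t) n
  rw [starPlay_def, starPlay_def, this]

lemma fI_continuous : Continuous (fI σ) := by
  apply continuous_pi
  intro n
  have hfact : (fun s => fI σ s n) =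
      (fun v : Fin (n + 1) → Bool =>
        fI σ (fun i => if h : i < n + 1 then v ⟨i, h⟩ else false) n) ∘
      (fun s (i : Fin (n + 1)) => s i) := by
    funext s
    exact fI_local σ (fun i hi => by simp [Nat.lt_succ_of_le hi]) 
  rw [hfact]
  exact (continuous_of_discreteTopology).comp
    (continuous_pi fun i => continuous_apply _)

end PlayerI

end StarAux

namespace StarAux

section PerfectPart

variable (σ : List StarRound → {l : List Bool // l ≠ []})

lemma range_fI_perfect : Perfect (Set.range (fI σ)) := by
  constructor
  · exact (isCompact_range (fI_continuous σ)).isClosed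
  · rintro x ⟨s, rfl⟩
    rw [accPt_iff_nhds]
    intro U hU
    -- the flipped sequences converge to s
    have htend : Filter.Tendsto (fun n => Function.update s n (!(s n)))
        Filter.atTop (nhds s) := by
      rw [tendsto_pi_nhds]
      intro i
      apply Filter.Tendsto.congr' (f₁ := fun _ => s i)
      · filter_upwards [Filter.eventually_ge_atTop (i + 1)] with n hn
        exact (Function.update_of_ne (by omega) _ _).symm
      · exact tendsto_const_nhds
    have h2 : Filter.Tendsto (fun n => fI σ (Function.update s n (!(s n))))
        Filter.atTop (nhds (fI σ s)) := ((fI_continuous σ).tendsto s).comp htend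
    have h3 : ∀ᶠ n in Filter.atTop, fI σ (Function.update s n (!(s n))) ∈ U :=
      h2.eventually hU
    obtain ⟨n, hn⟩ := h3.exists
    refine ⟨fI σ (Function.update s n (!(s n))), ⟨hn, ⟨_, rfl⟩⟩, ?_⟩
    intro hEq
    have := fI_injective σ hEq
    have h4 : Function.update s n (!(s n)) n = s n := by rw [this]
    rw [Function.update_self] at h4
    exact (Bool.not_ne_self (s n)) h4

end PerfectPart

end StarAux

namespace StarAux

section PlayerII

variable (τ : List StarRound → {l : List Bool // l ≠ []} → Bool)

/-- `l` is an initial segment of `x`. -/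
def Pref (l : List Bool) (x : ℕ → Bool) : Prop :=
  ∀ n < l.length, x n = l.getD n false

/-- Position `u` "kills" `x`: every further move of Player I compatible with `x`
gets a reply from `τ` that deviates from `x`. -/
def Kill (u : List StarRound) (x : ℕ → Bool) : Prop :=
  ∀ l : {l : List Bool // l ≠ []}, Pref (concatL u ++ l.val) x →
    τ u l ≠ x ((concatL u).length + l.val.length)

lemma exists_kill {A : Set (ℕ → Bool)}
    (H : ∀ p : ℕ → StarRound, StarConsII τ p → starPlay p ∉ A)
    {x : ℕ → Bool} (hx : x ∈ A) :
    ∃ u, Pref (concatL u) x ∧ Kill τ u x := by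
  classical
  by_contra hcon
  push_neg at hcon
  have H' : ∀ u, Pref (concatL u) x → ∃ l : {l : List Bool // l ≠ []},
      Pref (concatL u ++ l.val) x ∧
      τ u l = x ((concatL u).length + l.val.length) := by
    intro u hu
    have h1 := hcon u hu
    rw [Kill] at h1
    push_neg at h1
    exact h1
  set st : List StarRound → StarRound := fun u =>
    if h : ∃ l : {l : List Bool // l ≠ []}, Pref (concatL u ++ l.val) x ∧
        τ u l = x ((concatL u).length + l.val.length)
    then (h.choose, τ u h.choose) else (⟨[false], by simp⟩, false) with hst
  set p := buildPlay st with hp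
  have hpref : ∀ k, Pref (concatL (List.ofFn fun i : Fin k => p i)) x := by
    intro k
    induction k with
    | zero => intro n hn; simp [concatL] at hn
    | succ k ih =>
      set u := List.ofFn fun i : Fin k => p i with hu
      have hcond := H' u ih
      have hpk : p k = (hcond.choose, τ u hcond.choose) := by
        rw [hp, buildPlay_eq, ← hp, ← hu, hst]
        exact dif_pos hcond
      rw [ofFn_succ_append, ← hu, concatL_append, concatL_singleton, hpk]
      obtain ⟨hl1, hl2⟩ := hcond.choose_spec
      set l := hcond.choose with hl
      intro n hn
      simp only [blockL, List.length_append, List.length_cons, List.length_nil] at hn ⊢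
      have hassoc : concatL u ++ (l.val ++ [τ u l]) = (concatL u ++ l.val) ++ [τ u l] :=
        (List.append_assoc _ _ _).symm
      rcases Nat.lt_or_ge n ((concatL u).length + l.val.length) with h | h
      · rw [hassoc, List.getD_append _ _ _ _ (by simp; omega)]
        exact hl1 n (by simp; omega)
      · have hn' : n = (concatL u).length + l.val.length := by
          simp at hn; omega
        rw [hassoc, hn', List.getD_append_right _ _ _ _ (by simp)]
        simp [← hl2]
  have hcons : StarConsII τ p := by
    intro k
    set u := List.ofFn fun i : Fin k => p i with hu
    have hcond := H' u (hpref k)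
    have hpk : p k = (hcond.choose, τ u hcond.choose) := by
      rw [hp, buildPlay_eq, ← hp, ← hu, hst]
      exact dif_pos hcond
    rw [hpk]
  have hxeq : starPlay p = x := by
    funext n
    have hlen : n < (concatTo p (n + 1)).length :=
      lt_of_lt_of_le (Nat.lt_succ_self n) (length_concatTo_ge p (n + 1))
    have hlen' : n < (concatL (List.ofFn fun i : Fin (n + 1) => p i)).length := by
      rwa [← concatTo_eq_concatL]
    rw [starPlay_def, concatTo_eq_concatL]
    exact ((hpref (n + 1)) n hlen').symm
  exact H p hcons (hxeq ▸ hx)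

lemma getD_ofFn (f : ℕ → Bool) (m k j : ℕ) (h : j < k) :
    (List.ofFn fun i : Fin k => f (m + i)).getD j false = f (m + j) := by
  rw [List.getD_eq_getElem _ _ (by simpa using h), List.getElem_ofFn]

lemma killed_ext {u : List StarRound} {x y : ℕ → Bool}
    (hpx : Pref (concatL u) x) (hkx : Kill τ u x)
    (hpy : Pref (concatL u) y) (hky : Kill τ u y)
    (hb : x (concatL u).length = y (concatL u).length) : x = y := by
  set m := (concatL u).length with hm
  funext n
  induction n using Nat.strong_induction_on with
  | _ n ih =>
    rcases lt_trichotomy n m with h | h | h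
    · rw [hpx n h, hpy n h]
    · rw [h]; exact hb
    · obtain ⟨k, rfl⟩ : ∃ k, n = m + k + 1 := ⟨n - m - 1, by omega⟩
      set l : List Bool := List.ofFn (fun i : Fin (k + 1) => x (m + i)) with hl
      have hlen : l.length = k + 1 := by simp [hl]
      have hlne : l ≠ [] := by
        intro hc; rw [hc] at hlen; simp at hlen
      have prefx : Pref (concatL u ++ l) x := by
        intro j hj
        simp only [List.length_append, hlen] at hj
        rcases Nat.lt_or_ge j m with h' | h'
        · rw [List.getD_append _ _ _ _ (by omega)]
          exact hpx j h'
        · rw [List.getD_append_right _ _ _ _ (by omega), hl,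
            getD_ofFn x m (k + 1) (j - m) (by omega)]
          congr 1
          omega
      have prefy : Pref (concatL u ++ l) y := by
        intro j hj
        have hjlt : j < m + k + 1 := by
          simp only [List.length_append, hlen] at hj; omega
        rw [← ih j hjlt]
        exact prefx j hj
      have h1 := hkx ⟨l, hlne⟩ prefx
      have h2 := hky ⟨l, hlne⟩ prefy
      simp only [hlen] at h1 h2
      have hidx : m + (k + 1) = m + k + 1 := by omega
      rw [hidx] at h1 h2
      revert h1 h2
      generalize τ u ⟨l, hlne⟩ = c
      generalize x (m + k + 1) = a
      generalize y (m + k + 1) = b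
      revert a b c
      decide

lemma countable_of_tau {A : Set (ℕ → Bool)}
    (H : ∀ p : ℕ → StarRound, StarConsII τ p → starPlay p ∉ A) :
    A.Countable := by
  classical
  rw [← Set.countable_coe_iff]
  have key : ∀ z : A, ∃ u, Pref (concatL u) z.val ∧ Kill τ u z.val :=
    fun z => exists_kill τ H z.property
  set F : A → List StarRound × Bool := fun z =>
    ((key z).choose, z.val (concatL (key z).choose).length) with hF
  have hinj : Function.Injective F := by
    intro z w hzw
    have h1 : (key z).choose = (key w).choose := congrArg Prod.fst hzw
    have h2 := congrArg Prod.snd hzw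
    obtain ⟨hpz, hkz⟩ := (key z).choose_spec
    obtain ⟨hpw, hkw⟩ := (key w).choose_spec
    rw [h1] at hpz hkz
    simp only [hF, h1] at h2
    exact Subtype.ext (killed_ext τ hpz hkz hpw hkw h2)
  exact hinj.countable

end PlayerII

end StarAux

/-- Let `Γ` be a pointclass closed under complements all of whose members are
determined, such that for each `A ∈ Γ` the *-game `G*(A)` is also determined.
Then every `A ∈ Γ` has the perfect set property: `A` is countable or contains
a nonempty perfect subset. -/
theorem perfect_set_property_of_star_determinacy
    (Γ : Set (Set (ℕ → Bool)))
    (hcompl : ∀ A ∈ Γ, Aᶜ ∈ Γ)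
    (hdet : ∀ A ∈ Γ, Determined A)
    (hstar : ∀ A ∈ Γ, StarDetermined A) :
    ∀ A ∈ Γ, A.Countable ∨ ∃ C : Set (ℕ → Bool), C ⊆ A ∧ C.Nonempty ∧ Perfect C := by
  intro A hA
  rcases hstar A hA with ⟨σ, hσ⟩ | ⟨τ, hτ⟩
  · right
    refine ⟨Set.range (StarAux.fI σ), ?_,
      ⟨StarAux.fI σ (fun _ => false), ⟨_, rfl⟩⟩, StarAux.range_fI_perfect σ⟩
    rintro _ ⟨s, rfl⟩
    exact hσ _ (StarAux.playI_consI σ s)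
  · exact Or.inl (StarAux.countable_of_tau τ hτ)
end
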